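/- Let N, M, E be natural numbers, h > 0, and let S, K : ℝ × ℝ → (real N×N matrices) be matrix-valued functions of time t and a real parameter α, such that for every required time level t_* ∈ {t_n, t_n + h/2, t_{n+1} : n = 0,…,M−1} (t_n = nh), the maps α ↦ S(t_*, α) and α ↦ K(t_*, α) are differentiable at α = α*. For j = 0,…,E−1, fix vectors (independent of α) u_j^n, v_j^n (n = 0,…,M), stage vectors U_j^{n,1}, U_j^{n,2}, V_j^{n,1}, V_j^{n,2} with V_j^{n,1} = V_j^{n,2}, multipliers μ_j^n, ν_j^n, M_j^{n,1}, M_j^{n,2}, N_j^{n,1}, N_j^{n,2} ∈ ℝ^N, and define for each α the six sums T_j^1(α) = Σ_n ⟨u_j^{n+1} − u_j^n − (h/2)(S_n U_j^{n,1} + S_{n+1} U_j^{n,2} − K_n V_j^{n,1} − K_{n+1} V_j^{n,2}), μ_j^{n+1}⟩, T_j^2(α) = Σ_n ⟨v_j^{n+1} − v_j^n − (h/2)(K_{n+1/2}(U_j^{n,1} + U_j^{n,2}) + S_{n+1/2}(V_j^{n,1} + V_j^{n,2})), ν_j^{n+1}⟩, T_j^3(α) = Σ_n ⟨U_j^{n,1}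 − u_j^n, M_j^{n,1}⟩, T_j^4(α) = Σ_n ⟨U_j^{n,2} − u_j^n − (h/2)(S_n U_j^{n,1} + S_{n+1} U_j^{n,2} − K_n V_j^{n,1} − K_{n+1} V_j^{n,2}), M_j^{n,2}⟩, T_j^5(α) = Σ_n ⟨V_j^{n,1} − v_j^n − (h/2)(K_{n+1/2} U_j^{n,1} + S_{n+1/2} V_j^{n,1}), N_j^{n,1}⟩, T_j^6(α) = Σ_n ⟨V_j^{n,2} − v_j^n − (h/2)(K_{n+1/2} U_j^{n,1} + S_{n+1/2} V_j^{n,1}), N_j^{n,2}⟩, where S_n = S(t_n, α), K_{n+1/2} = K(t_n + h/2, α), etc. Set X_j^n := μ_j^{n+1} + M_j^{n,2}, Y_j^{n,1} := ν_j^{n+1} + N_j^{n,1} + N_j^{n,2}, Y_j^{n,2} := ν_j^{n+1}. Then the derivative at α = α* of α ↦ −Σ_{j=0}^{E−1} Σ_{k=1}^{6} T_j^k(α) equals (h/2) Σ_{j=0}^{E−1} Σ_{n=0}^{M−1} [ ⟨S'_n U_j^{n,1} + S'_{n+1} U_j^{n,2} − (K'_n + K'_{n+1}) V_j^{n,1},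 X_j^n⟩ + ⟨K'_{n+1/2} U_j^{n,1} + S'_{n+1/2} V_j^{n,1}, Y_j^{n,1}⟩ + ⟨K'_{n+1/2} U_j^{n,2} + S'_{n+1/2} V_j^{n,1}, Y_j^{n,2}⟩ ], where primes denote ∂/∂α evaluated at (t_*, α*). -/

import Mathlib

open Matrix

/-- Lemma 2 of the paper: the derivative with respect to the control parameter `α` of the
constraint part `-∑_j ∑_k T_j^k` of the discrete Lagrangian equals the adjoint-based gradient
expression. -/
theorem discrete_gradient_formula
    (Nd M E : ℕ) (h : ℝ) (hh : 0 < h) (αstar : ℝ)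
    (S K S' K' : ℝ → ℝ → Matrix (Fin Nd) (Fin Nd) ℝ)
    (hS : ∀ n < M, ∀ t ∈ ({n * h, n * h + h / 2, (n + 1) * h} : Set ℝ), ∀ i j : Fin Nd,
      HasDerivAt (fun α => S t α i j) (S' t αstar i j) αstar)
    (hK : ∀ n < M, ∀ t ∈ ({n * h, n * h + h / 2, (n + 1) * h} : Set ℝ), ∀ i j : Fin Nd,
      HasDerivAt (fun α => K t α i j) (K' t αstar i j) αstar)
    (u v : Fin E → ℕ → Fin Nd → ℝ)
    (U V : Fin E → ℕ → Fin 2 → Fin Nd → ℝ)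
    (hV : ∀ j n, V j n 0 = V j n 1)
    (μ ν : Fin E → ℕ → Fin Nd → ℝ)
    (Mm Nm : Fin E → ℕ → Fin 2 → Fin Nd → ℝ)
    (X Y1 Y2 : Fin E → ℕ → Fin Nd → ℝ)
    (hX : ∀ j n, X j n = μ j (n + 1) + Mm j n 1)
    (hY1 : ∀ j n, Y1 j n = ν j (n + 1) + Nm j n 0 + Nm j n 1)
    (hY2 : ∀ j n, Y2 j n = ν j (n + 1))
    (T1 T2 T3 T4 T5 T6 : Fin E → ℝ → ℝ)
    (hT1 : ∀ j α, T1 j α = ∑ n ∈ Finset.range M,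
      (u j (n + 1) - u j n - (h / 2) • ((S (n * h) α).mulVec (U j n 0)
        + (S ((n + 1) * h) α).mulVec (U j n 1) - (K (n * h) α).mulVec (V j n 0)
        - (K ((n + 1) * h) α).mulVec (V j n 1))) ⬝ᵥ μ j (n + 1))
    (hT2 : ∀ j α, T2 j α = ∑ n ∈ Finset.range M,
      (v j (n + 1) - v j n - (h / 2) • ((K (n * h + h / 2) α).mulVec (U j n 0 + U j n 1)
        + (S (n * h + h / 2) α).mulVec (V j n 0 + V j n 1))) ⬝ᵥ ν j (n + 1))
    (hT3 : ∀ j α, T3 j α = ∑ n ∈ Finset.range M,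
      (U j n 0 - u j n) ⬝ᵥ Mm j n 0)
    (hT4 : ∀ j α, T4 j α = ∑ n ∈ Finset.range M,
      (U j n 1 - u j n - (h / 2) • ((S (n * h) α).mulVec (U j n 0)
        + (S ((n + 1) * h) α).mulVec (U j n 1) - (K (n * h) α).mulVec (V j n 0)
        - (K ((n + 1) * h) α).mulVec (V j n 1))) ⬝ᵥ Mm j n 1)
    (hT5 : ∀ j α, T5 j α = ∑ n ∈ Finset.range M,
      (V j n 0 - v j n - (h / 2) • ((K (n * h + h / 2) α).mulVec (U j n 0)
        + (S (n * h + h / 2) α).mulVec (V j n 0))) ⬝ᵥ Nm j n 0)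
    (hT6 : ∀ j α, T6 j α = ∑ n ∈ Finset.range M,
      (V j n 1 - v j n - (h / 2) • ((K (n * h + h / 2) α).mulVec (U j n 0)
        + (S (n * h + h / 2) α).mulVec (V j n 0))) ⬝ᵥ Nm j n 1) :
    HasDerivAt
      (fun α => -∑ j : Fin E, (T1 j α + T2 j α + T3 j α + T4 j α + T5 j α + T6 j α))
      ((h / 2) * ∑ j : Fin E, ∑ n ∈ Finset.range M,
        (((S' (n * h) αstar).mulVec (U j n 0) + (S' ((n + 1) * h) αstar).mulVec (U j n 1)
            - (K' (n * h) αstar + K' ((n + 1) * h) αstar).mulVec (V j n 0)) ⬝ᵥ X j n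
          + ((K' (n * h + h / 2) αstar).mulVec (U j n 0)
            + (S' (n * h + h / 2) αstar).mulVec (V j n 0)) ⬝ᵥ Y1 j n
          + ((K' (n * h + h / 2) αstar).mulVec (U j n 1)
            + (S' (n * h + h / 2) αstar).mulVec (V j n 0)) ⬝ᵥ Y2 j n))
      αstar := by
  -- helper: derivative of α ↦ (A α).mulVec x ⬝ᵥ y from entrywise derivatives
  have hdot : ∀ (f : ℝ → Matrix (Fin Nd) (Fin Nd) ℝ) (f' : Matrix (Fin Nd) (Fin Nd) ℝ),
      (∀ i j, HasDerivAt (fun α => f α i j) (f' i j) αstar) → ∀ (x y : Fin Nd → ℝ),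
      HasDerivAt (fun α => (f α).mulVec x ⬝ᵥ y) (f'.mulVec x ⬝ᵥ y) αstar := by
    intro f f' hf x y
    simp only [Matrix.mulVec, dotProduct]
    exact HasDerivAt.fun_sum fun i _ =>
      (HasDerivAt.fun_sum fun j _ => (hf i j).mul_const (x j)).mul_const (y i)
  have hSd : ∀ n ∈ Finset.range M,
      ∀ t ∈ ({(n : ℝ) * h, (n : ℝ) * h + h / 2, ((n : ℝ) + 1) * h} : Set ℝ),
      ∀ (x y : Fin Nd → ℝ),
      HasDerivAt (fun α => (S t α).mulVec x ⬝ᵥ y) ((S' t αstar).mulVec x ⬝ᵥ y) αstar :=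
    fun n hn t ht x y => hdot _ _ (hS n (Finset.mem_range.mp hn) t ht) x y
  have hKd : ∀ n ∈ Finset.range M,
      ∀ t ∈ ({(n : ℝ) * h, (n : ℝ) * h + h / 2, ((n : ℝ) + 1) * h} : Set ℝ),
      ∀ (x y : Fin Nd → ℝ),
      HasDerivAt (fun α => (K t α).mulVec x ⬝ᵥ y) ((K' t αstar).mulVec x ⬝ᵥ y) αstar :=
    fun n hn t ht x y => hdot _ _ (hK n (Finset.mem_range.mp hn) t ht) x y
  have mem1 : ∀ n : ℕ, (n : ℝ) * h ∈
      ({(n : ℝ) * h, (n : ℝ) * h + h / 2, ((n : ℝ) + 1) * h} : Set ℝ) :=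
    fun n => Set.mem_insert _ _
  have mem2 : ∀ n : ℕ, (n : ℝ) * h + h / 2 ∈
      ({(n : ℝ) * h, (n : ℝ) * h + h / 2, ((n : ℝ) + 1) * h} : Set ℝ) :=
    fun n => Set.mem_insert_of_mem _ (Set.mem_insert _ _)
  have mem3 : ∀ n : ℕ, ((n : ℝ) + 1) * h ∈
      ({(n : ℝ) * h, (n : ℝ) * h + h / 2, ((n : ℝ) + 1) * h} : Set ℝ) :=
    fun n => Set.mem_insert_of_mem _ (Set.mem_insert_of_mem _ rfl)
  -- derivatives of the six constraint sums
  have hd1 : ∀ j, HasDerivAt (fun α => T1 j α)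
      (∑ n ∈ Finset.range M, -((h / 2) * (((S' ((n : ℝ) * h) αstar).mulVec (U j n 0)
        + (S' (((n : ℝ) + 1) * h) αstar).mulVec (U j n 1)
        - (K' ((n : ℝ) * h) αstar).mulVec (V j n 0)
        - (K' (((n : ℝ) + 1) * h) αstar).mulVec (V j n 1)) ⬝ᵥ μ j (n + 1)))) αstar := by
    intro j
    simp only [hT1, sub_dotProduct, smul_dotProduct, smul_eq_mul, add_dotProduct]
    exact HasDerivAt.fun_sum fun n hn =>
      (((((hSd n hn _ (mem1 n) _ _).add (hSd n hn _ (mem3 n) _ _)).sub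
        (hKd n hn _ (mem1 n) _ _)).sub (hKd n hn _ (mem3 n) _ _)).const_mul (h / 2)).const_sub _
  have hd2 : ∀ j, HasDerivAt (fun α => T2 j α)
      (∑ n ∈ Finset.range M, -((h / 2) * (((K' ((n : ℝ) * h + h / 2) αstar).mulVec
          (U j n 0 + U j n 1)
        + (S' ((n : ℝ) * h + h / 2) αstar).mulVec (V j n 0 + V j n 1)) ⬝ᵥ ν j (n + 1)))) αstar := by
    intro j
    simp only [hT2, sub_dotProduct, smul_dotProduct, smul_eq_mul, add_dotProduct]
    exact HasDerivAt.fun_sum fun n hn =>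
      (((hKd n hn _ (mem2 n) _ _).add (hSd n hn _ (mem2 n) _ _)).const_mul (h / 2)).const_sub _
  have hd3 : ∀ j, HasDerivAt (fun α => T3 j α) 0 αstar := by
    intro j
    simp only [hT3]
    exact hasDerivAt_const _ _
  have hd4 : ∀ j, HasDerivAt (fun α => T4 j α)
      (∑ n ∈ Finset.range M, -((h / 2) * (((S' ((n : ℝ) * h) αstar).mulVec (U j n 0)
        + (S' (((n : ℝ) + 1) * h) αstar).mulVec (U j n 1)
        - (K' ((n : ℝ) * h) αstar).mulVec (V j n 0)
        - (K' (((n : ℝ) + 1) * h) αstar).mulVec (V j n 1)) ⬝ᵥ Mm j n 1))) αstar := by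
    intro j
    simp only [hT4, sub_dotProduct, smul_dotProduct, smul_eq_mul, add_dotProduct]
    exact HasDerivAt.fun_sum fun n hn =>
      (((((hSd n hn _ (mem1 n) _ _).add (hSd n hn _ (mem3 n) _ _)).sub
        (hKd n hn _ (mem1 n) _ _)).sub (hKd n hn _ (mem3 n) _ _)).const_mul (h / 2)).const_sub _
  have hd5 : ∀ j, HasDerivAt (fun α => T5 j α)
      (∑ n ∈ Finset.range M, -((h / 2) * (((K' ((n : ℝ) * h + h / 2) αstar).mulVec (U j n 0)
        + (S' ((n : ℝ) * h + h / 2) αstar).mulVec (V j n 0)) ⬝ᵥ Nm j n 0))) αstar := by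
    intro j
    simp only [hT5, sub_dotProduct, smul_dotProduct, smul_eq_mul, add_dotProduct]
    exact HasDerivAt.fun_sum fun n hn =>
      (((hKd n hn _ (mem2 n) _ _).add (hSd n hn _ (mem2 n) _ _)).const_mul (h / 2)).const_sub _
  have hd6 : ∀ j, HasDerivAt (fun α => T6 j α)
      (∑ n ∈ Finset.range M, -((h / 2) * (((K' ((n : ℝ) * h + h / 2) αstar).mulVec (U j n 0)
        + (S' ((n : ℝ) * h + h / 2) αstar).mulVec (V j n 0)) ⬝ᵥ Nm j n 1))) αstar := by
    intro j
    simp only [hT6, sub_dotProduct, smul_dotProduct, smul_eq_mul, add_dotProduct]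
    exact HasDerivAt.fun_sum fun n hn =>
      (((hKd n hn _ (mem2 n) _ _).add (hSd n hn _ (mem2 n) _ _)).const_mul (h / 2)).const_sub _
  have H := (HasDerivAt.fun_sum (fun j (_ : j ∈ Finset.univ) =>
    ((((((hd1 j).add (hd2 j)).add (hd3 j)).add (hd4 j)).add (hd5 j)).add (hd6 j)))).neg
  refine H.congr_deriv ?_
  rw [neg_eq_iff_eq_neg, Finset.mul_sum, ← Finset.sum_neg_distrib]
  refine Finset.sum_congr rfl fun j _ => ?_
  rw [Finset.mul_sum, ← Finset.sum_neg_distrib]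
  simp only [add_zero, ← Finset.sum_add_distrib]
  refine Finset.sum_congr rfl fun n _ => ?_
  simp only [hX, hY1, hY2, ← hV, Matrix.add_mulVec, Matrix.sub_mulVec, Matrix.mulVec_add,
    add_dotProduct, sub_dotProduct, dotProduct_add]
  ring
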